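/- Let T be a linear, trace-preserving, positive map on M_d(ℂ) and T^∞ the spectral projection onto its fixed-point space (the Cesàro mean limit of T^k). Then the map id − (T − T^∞) is invertible as a linear operator on M_d(ℂ). -/

import Mathlib

open Matrix Filter
open scoped ComplexOrder

/-- Trace norm (Schatten 1-norm) of a complex matrix: `tr √(XᴴX)`. -/
noncomputable def traceNorm {d : ℕ} (X : Matrix (Fin d) (Fin d) ℂ) : ℝ :=
  (((Matrix.posSemidef_conjTranspose_mul_self X).1.eigenvectorUnitary : Matrix (Fin d) (Fin d) ℂ) *
    diagonal ((fun x : ℝ => (x : ℂ)) ∘ Real.sqrt ∘ (Matrix.posSemidef_conjTranspose_mul_self X).1.eigenvalues) *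
    (star (Matrix.posSemidef_conjTranspose_mul_self X).1.eigenvectorUnitary :
      Matrix (Fin d) (Fin d) ℂ)).trace.re

/-- Linear endomorphisms of `M_d(ℂ)` (superoperators). -/
abbrev MatEnd (d : ℕ) := Module.End ℂ (Matrix (Fin d) (Fin d) ℂ)

/-- Trace-preserving map. -/
def IsTP {d : ℕ} (T : MatEnd d) : Prop := ∀ X, (T X).trace = X.trace

/-- Positive map: maps PSD matrices to PSD matrices. -/
def IsPos {d : ℕ} (T : MatEnd d) : Prop := ∀ X, X.PosSemidef → (T X).PosSemidef

/-- Hermiticity-preserving map. -/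
def IsHP {d : ℕ} (T : MatEnd d) : Prop := ∀ X, (T X)ᴴ = T Xᴴ

/-- Induced 1→1 norm: `sup_{X ≠ 0} ‖T X‖₁ / ‖X‖₁`. -/
noncomputable def norm1to1 {d : ℕ} (T : MatEnd d) : ℝ :=
  sSup {r | ∃ X, X ≠ 0 ∧ r = traceNorm (T X) / traceNorm X}

/-- Trace-norm contraction coefficient: sup over nonzero Hermitian traceless `σ`. -/
noncomputable def tau {d : ℕ} (T : MatEnd d) : ℝ :=
  sSup {r | ∃ σ : Matrix (Fin d) (Fin d) ℂ,
    σ.IsHermitian ∧ σ.trace = 0 ∧ σ ≠ 0 ∧ r = traceNorm (T σ) / traceNorm σ}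

/-- Density matrix: positive semidefinite with unit trace. -/
def IsDensity {d : ℕ} (ρ : Matrix (Fin d) (Fin d) ℂ) : Prop := ρ.PosSemidef ∧ ρ.trace = 1

/-- `Tinf` is the Cesàro-mean fixed point projection of `T`. -/
def IsCesaroProj {d : ℕ} (T Tinf : MatEnd d) : Prop :=
  ∀ X, Tendsto (fun n : ℕ => (n : ℂ)⁻¹ • ∑ k ∈ Finset.range n, (T ^ (k + 1)) X)
    atTop (nhds (Tinf X))
lemma inv_nat_tendsto : Tendsto (fun n : ℕ => ((n : ℂ))⁻¹) atTop (nhds 0) := by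
  have h : Tendsto (fun n : ℕ => ((n : ℝ))⁻¹) atTop (nhds 0) :=
    tendsto_inv_atTop_nhds_zero_nat
  have := (Complex.continuous_ofReal.tendsto 0).comp h
  refine this.congr fun n => ?_
  simp

lemma ratio_tendsto : Tendsto (fun n : ℕ => ((n : ℂ) + 1) / n) atTop (nhds 1) := by
  have h : Tendsto (fun n : ℕ => 1 + ((n : ℂ))⁻¹) atTop (nhds 1) := by
    simpa using (tendsto_const_nhds.add inv_nat_tendsto)
  refine h.congr' ?_
  filter_upwards [eventually_ge_atTop 1] with n hn
  have hn0 : (n : ℂ) ≠ 0 := by exact_mod_cast Nat.one_le_iff_ne_zero.mp hn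
  field_simp

lemma cesaro_shift {d : ℕ} (T : MatEnd d) (X L : Matrix (Fin d) (Fin d) ℂ)
    (h : Tendsto (fun n : ℕ => (n : ℂ)⁻¹ • ∑ k ∈ Finset.range n, (T ^ (k + 1)) X)
      atTop (nhds L)) :
    Tendsto (fun n : ℕ => (n : ℂ)⁻¹ • ∑ k ∈ Finset.range n, (T ^ (k + 2)) X)
      atTop (nhds L) := by
  set a : ℕ → Matrix (Fin d) (Fin d) ℂ :=
    fun n => (n : ℂ)⁻¹ • ∑ k ∈ Finset.range n, (T ^ (k + 1)) X with ha
  have hlim : Tendsto (fun n : ℕ => (((n : ℂ) + 1) / n) • a (n + 1) - (n : ℂ)⁻¹ • (T X))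
      atTop (nhds L) := by
    have h1 : Tendsto (fun n : ℕ => a (n + 1)) atTop (nhds L) :=
      h.comp (tendsto_add_atTop_nat 1)
    have h2 := ratio_tendsto.smul h1
    have h3 := inv_nat_tendsto.smul_const (T X)
    simpa using h2.sub h3
  refine hlim.congr' ?_
  filter_upwards [eventually_ge_atTop 1] with n hn
  have hn0 : (n : ℂ) ≠ 0 := by exact_mod_cast Nat.one_le_iff_ne_zero.mp hn
  have hn1 : ((n : ℂ) + 1) ≠ 0 := by
    have : ((n : ℂ) + 1) = ((n + 1 : ℕ) : ℂ) := by push_cast; ring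
    rw [this]
    exact_mod_cast Nat.succ_ne_zero n
  have hsum : ∑ k ∈ Finset.range (n + 1), (T ^ (k + 1)) X
      = (∑ k ∈ Finset.range n, (T ^ (k + 2)) X) + T X := by
    rw [Finset.sum_range_succ' (fun k => (T ^ (k + 1)) X) n]
    simp [pow_one]
  have hcoef : ((n : ℂ) + 1) / n * (((n + 1 : ℕ) : ℂ))⁻¹ = (n : ℂ)⁻¹ := by
    push_cast
    field_simp
  simp only [ha, hsum, smul_add, smul_smul, hcoef]
  abel

lemma const_cesaro {d : ℕ} (T : MatEnd d) (Y : Matrix (Fin d) (Fin d) ℂ)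
    (hY : T Y = Y) :
    Tendsto (fun n : ℕ => (n : ℂ)⁻¹ • ∑ k ∈ Finset.range n, (T ^ (k + 1)) Y)
      atTop (nhds Y) := by
  have hpow : ∀ m : ℕ, (T ^ m) Y = Y := by
    intro m
    induction m with
    | zero => rfl
    | succ k ih => rw [pow_succ, Module.End.mul_apply, hY, ih]
  have : Tendsto (fun _ : ℕ => Y) atTop (nhds Y) := tendsto_const_nhds
  refine this.congr' ?_
  filter_upwards [eventually_ge_atTop 1] with n hn
  have hn0 : (n : ℂ) ≠ 0 := by exact_mod_cast Nat.one_le_iff_ne_zero.mp hn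
  simp only [hpow, Finset.sum_const, Finset.card_range]
  rw [← Nat.cast_smul_eq_nsmul ℂ, smul_smul, inv_mul_cancel₀ hn0, one_smul]

/-- `id − (T − T^∞)` is invertible. -/
theorem isUnit_id_sub {d : ℕ} (T Tinf : MatEnd d) (hTP : IsTP T) (hPos : IsPos T)
    (hinf : IsCesaroProj T Tinf) : IsUnit (1 - (T - Tinf) : MatEnd d) := by
  have hTinfT : ∀ X, Tinf (T X) = Tinf X := by
    intro X
    have h1 := hinf (T X)
    have h1' : Tendsto (fun n : ℕ => (n : ℂ)⁻¹ • ∑ k ∈ Finset.range n, (T ^ (k + 2)) X)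
        atTop (nhds (Tinf (T X))) := by
      refine h1.congr fun n => ?_
      congr 1
    exact tendsto_nhds_unique h1' (cesaro_shift T X (Tinf X) (hinf X))
  have hcont : Continuous T := LinearMap.continuous_of_finiteDimensional T
  have hTTinf : ∀ X, T (Tinf X) = Tinf X := by
    intro X
    have h2 : Tendsto (fun n : ℕ =>
        T ((n : ℂ)⁻¹ • ∑ k ∈ Finset.range n, (T ^ (k + 1)) X))
        atTop (nhds (T (Tinf X))) := (hcont.tendsto _).comp (hinf X)
    have h2' : Tendsto (fun n : ℕ => (n : ℂ)⁻¹ • ∑ k ∈ Finset.range n, (T ^ (k + 2)) X)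
        atTop (nhds (T (Tinf X))) := by
      refine h2.congr fun n => ?_
      rw [_root_.map_smul, map_sum]
      congr 1
      refine Finset.sum_congr rfl fun k _ => ?_
      simp [pow_succ', Module.End.mul_apply]
    exact tendsto_nhds_unique h2' (cesaro_shift T X (Tinf X) (hinf X))
  have hidem : ∀ X, Tinf (Tinf X) = Tinf X := fun X =>
    tendsto_nhds_unique (hinf (Tinf X)) (const_cesaro T (Tinf X) (hTTinf X))
  have hfix : ∀ X, T X = X → Tinf X = X := fun X hX =>
    tendsto_nhds_unique (hinf X) (const_cesaro T X hX)
  rw [LinearMap.isUnit_iff_ker_eq_bot, LinearMap.ker_eq_bot']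
  intro X hX
  simp only [LinearMap.sub_apply, Module.End.one_apply] at hX
  have hX' : X = T X - Tinf X := by
    rw [sub_eq_zero] at hX
    linear_combination (norm := module) hX
  have h0 : Tinf X = 0 := by
    have := congrArg Tinf hX'
    rw [map_sub, hTinfT, hidem, sub_self] at this
    exact this
  have hTX : T X = X := by
    rw [h0, sub_zero] at hX'
    exact hX'.symm
  have := hfix X hTX
  rw [h0] at this
  exact this.symm
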